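/- arXiv:1802.09646 — 4 statements merged into one kernel-verified Lean document; each statement's English description precedes it below -/
import Mathlib

section
/- Let P_1, ..., P_m be row-stochastic matrices on a finite state space, let γ ∈ (0,1), let α be a probability vector, and for each i define the occupancy measure ν_i by ν_i^T = (1-γ) α^T (I - γ P_i)^{-1}. Suppose ε = max_{i,j ∈ [m]} ‖ν_i - ν_j‖_1. Then for every i ∈ [m] and every weight vector w in the probability simplex Δ_[m], the occupancy measure ν_w of the mixture chain P_w = Σ_{k=1}^m w_k P_k, defined by ν_w^T = (1-γ) α^T (I - γ P_w)^{-1}, satisfies ‖ν_i - ν_w‖_1 ≤ ε(1+γ)/(1-γ). -/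
open Matrix BigOperators

attribute [local instance] Matrix.linftyOpNormedRing Matrix.linftyOpNormedAlgebra

set_option linter.unusedSectionVars false

section Aux

variable {X : Type*} [Fintype X] [DecidableEq X]

/-- ℓ¹ bound on a vector-matrix product. -/
lemma vecMul_l1_le (u : X → ℝ) (M : Matrix X X ℝ) (C : ℝ)
    (hM : ∀ x, ∑ y, |M x y| ≤ C) :
    ∑ y, |Matrix.vecMul u M y| ≤ C * ∑ x, |u x| := by
  calc ∑ y, |Matrix.vecMul u M y| ≤ ∑ y, ∑ x, |u x * M x y| := by
        refine Finset.sum_le_sum fun y _ => ?_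
        exact Finset.abs_sum_le_sum_abs _ _
    _ = ∑ x, |u x| * ∑ y, |M x y| := by
        rw [Finset.sum_comm]
        simp [abs_mul, Finset.mul_sum]
    _ ≤ ∑ x, |u x| * C :=
        Finset.sum_le_sum fun x _ => mul_le_mul_of_nonneg_left (hM x) (abs_nonneg _)
    _ = C * ∑ x, |u x| := by rw [← Finset.sum_mul, mul_comm]

/-- Core facts about the resolvent of a stochastic matrix. -/
lemma stoch_resolvent (γ : ℝ) (hγ0 : 0 < γ) (hγ1 : γ < 1)
    (Q : Matrix X X ℝ) (hQ0 : ∀ x y, 0 ≤ Q x y) (hQ1 : ∀ x, ∑ y, Q x y = 1) :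
    (1 - γ • Q)⁻¹ * (1 - γ • Q) = 1 ∧ (1 - γ • Q) * (1 - γ • Q)⁻¹ = 1 ∧
      (∀ x y, 0 ≤ (1 - γ • Q)⁻¹ x y) ∧ (∀ x, ∑ y, (1 - γ • Q)⁻¹ x y = 1 / (1 - γ)) := by
  have hnorm : ‖γ • Q‖ < 1 := by
    rw [Matrix.linfty_opNorm_def]
    have hsup : ((Finset.univ : Finset X).sup fun i : X => ∑ j : X, ‖(γ • Q) i j‖₊) < 1 := by
      refine Finset.sup_lt_iff (by norm_num) |>.mpr fun i _ => ?_
      rw [← NNReal.coe_lt_coe]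
      push_cast
      have : ∀ j, ‖(γ • Q) i j‖ = γ * Q i j := by
        intro j
        simp only [Matrix.smul_apply, smul_eq_mul, Real.norm_eq_abs]
        exact abs_of_nonneg (mul_nonneg hγ0.le (hQ0 i j))
      simp only [this, ← Finset.mul_sum, hQ1 i, mul_one]
      exact hγ1
    exact_mod_cast hsup
  have hsum : Summable (fun n : ℕ => (γ • Q) ^ n) :=
    summable_geometric_of_norm_lt_one hnorm
  set B : Matrix X X ℝ := ∑' n : ℕ, (γ • Q) ^ n with hB
  have hBA : B * (1 - γ • Q) = 1 := geom_series_mul_neg _ hnorm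
  have hinv : (1 - γ • Q)⁻¹ = B := Matrix.inv_eq_left_inv hBA
  have hAB : (1 - γ • Q) * B = 1 := mul_eq_one_comm.mpr hBA
  have hpow : ∀ (n : ℕ) (x y : X), 0 ≤ ((γ • Q) ^ n) x y := by
    intro n
    induction n with
    | zero =>
      intro x y
      rw [pow_zero]
      by_cases h : x = y <;> simp [Matrix.one_apply, h]
    | succ n ih =>
      intro x y
      rw [pow_succ, Matrix.mul_apply]
      refine Finset.sum_nonneg fun z _ => mul_nonneg (ih x z) ?_
      simp only [Matrix.smul_apply, smul_eq_mul]
      exact mul_nonneg hγ0.le (hQ0 z y)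
  have hentry : ∀ x y : X, HasSum (fun n : ℕ => ((γ • Q) ^ n) x y) (B x y) := by
    intro x y
    exact hsum.hasSum.map (Matrix.entryLinearMap ℝ ℝ x y)
      (LinearMap.continuous_of_finiteDimensional _)
  have hBnn : ∀ x y, 0 ≤ B x y := by
    intro x y
    rw [← (hentry x y).tsum_eq]
    exact tsum_nonneg fun n => hpow n x y
  have hArow : ∀ z, ∑ y, (1 - γ • Q) z y = 1 - γ := by
    intro z
    simp only [Matrix.sub_apply, Matrix.smul_apply, Matrix.one_apply, smul_eq_mul]
    rw [Finset.sum_sub_distrib, ← Finset.mul_sum, hQ1]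
    simp
  have hBrow : ∀ x, ∑ y, B x y = 1 / (1 - γ) := by
    intro x
    have h1 : ∑ y, (B * (1 - γ • Q)) x y = 1 := by
      rw [hBA]
      simp [Matrix.one_apply]
    have h2 : ∑ y, (B * (1 - γ • Q)) x y = (1 - γ) * ∑ z, B x z := by
      simp_rw [Matrix.mul_apply]
      rw [Finset.sum_comm]
      calc ∑ z, ∑ y, B x z * (1 - γ • Q) z y
          = ∑ z, B x z * (1 - γ) := by
            refine Finset.sum_congr rfl fun z _ => ?_
            rw [← Finset.mul_sum, hArow z]
        _ = (1 - γ) * ∑ z, B x z := by rw [← Finset.sum_mul, mul_comm]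
    have hγne : (1 : ℝ) - γ ≠ 0 := by linarith
    field_simp
    linarith [h1, h2]
  rw [hinv]
  exact ⟨hBA, hAB, hBnn, hBrow⟩

/-- linearity of vecMul in the matrix argument: sums. -/
lemma vecMul_matrix_sum {m : ℕ} (v : X → ℝ) (M : Fin m → Matrix X X ℝ) :
    Matrix.vecMul v (∑ k, M k) = ∑ k, Matrix.vecMul v (M k) := by
  funext y
  simp only [Matrix.vecMul, dotProduct, Finset.sum_apply, Matrix.sum_apply,
    Finset.mul_sum]
  rw [Finset.sum_comm]

lemma vecMul_matrix_smul (v : X → ℝ) (c : ℝ) (M : Matrix X X ℝ) :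
    Matrix.vecMul v (c • M) = c • Matrix.vecMul v M := by
  funext y
  simp only [Matrix.vecMul, dotProduct, Matrix.smul_apply, Pi.smul_apply,
    smul_eq_mul, Finset.mul_sum]
  exact Finset.sum_congr rfl fun x _ => by ring

end Aux

/-- Let `P 1, …, P m` be row-stochastic matrices on a finite state space,
`γ ∈ (0,1)`, `α` a probability vector, and for each `i` let `ν i` be the occupancy measure
`ν iᵀ = (1-γ) αᵀ (I - γ P i)⁻¹`.  If `ε` is the maximum over `i, j` of `‖ν i - ν j‖₁`, then for
every `i` and every weight vector `w` in the simplex, the occupancy measure of the mixture chain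
`P_w = ∑ k, w k • P k` satisfies `‖ν i - ν_w‖₁ ≤ ε (1+γ)/(1-γ)`. -/
theorem occupancy_mixture_close {X : Type*} [Fintype X] [DecidableEq X] {m : ℕ}
    (P : Fin m → Matrix X X ℝ)
    (hPnonneg : ∀ i x x', 0 ≤ P i x x') (hProw : ∀ i x, ∑ x', P i x x' = 1)
    (γ : ℝ) (hγ : γ ∈ Set.Ioo (0 : ℝ) 1)
    (α : X → ℝ) (hαnonneg : ∀ x, 0 ≤ α x) (hαsum : ∑ x, α x = 1)
    (ν : Fin m → X → ℝ)
    (hν : ∀ i, ν i = (1 - γ) • Matrix.vecMul α (1 - γ • P i)⁻¹)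
    (ε : ℝ)
    (hε : IsGreatest {d : ℝ | ∃ i j : Fin m, d = ∑ x, |ν i x - ν j x|} ε) :
    ∀ (i : Fin m) (w : Fin m → ℝ), (∀ k, 0 ≤ w k) → ∑ k, w k = 1 →
      ∑ x, |ν i x -
          ((1 - γ) • Matrix.vecMul α (1 - γ • ∑ k, w k • P k)⁻¹) x| ≤
        ε * (1 + γ) / (1 - γ) := by
  obtain ⟨hγ0, hγ1⟩ := hγ
  have h1γ : (0 : ℝ) < 1 - γ := by linarith
  intro i w hw hwsum
  set Q : Matrix X X ℝ := ∑ k, w k • P k with hQdef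
  have hQ0 : ∀ x y, 0 ≤ Q x y := by
    intro x y
    simp only [hQdef, Matrix.sum_apply, Matrix.smul_apply, smul_eq_mul]
    exact Finset.sum_nonneg fun k _ => mul_nonneg (hw k) (hPnonneg k x y)
  have hQ1 : ∀ x, ∑ y, Q x y = 1 := by
    intro x
    simp only [hQdef, Matrix.sum_apply, Matrix.smul_apply, smul_eq_mul]
    rw [Finset.sum_comm]
    calc ∑ k, ∑ y, w k * P k x y = ∑ k, w k := by
          refine Finset.sum_congr rfl fun k _ => ?_
          rw [← Finset.mul_sum, hProw k x, mul_one]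
      _ = 1 := hwsum
  obtain ⟨hQBA, hQAB, hQBnn, hQBrow⟩ := stoch_resolvent γ hγ0 hγ1 Q hQ0 hQ1
  have hk := fun k => stoch_resolvent γ hγ0 hγ1 (P k) (hPnonneg k) (hProw k)
  set νw : X → ℝ := (1 - γ) • Matrix.vecMul α (1 - γ • Q)⁻¹ with hνw
  have hsk : ∀ k, Matrix.vecMul (ν k) (1 - γ • P k) = (1 - γ) • α := by
    intro k
    rw [hν k, Matrix.smul_vecMul, Matrix.vecMul_vecMul, (hk k).1, Matrix.vecMul_one]
  have hsw : Matrix.vecMul νw (1 - γ • Q) = (1 - γ) • α := by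
    rw [hνw, Matrix.smul_vecMul, Matrix.vecMul_vecMul, hQBA, Matrix.vecMul_one]
  set u : Fin m → X → ℝ := fun k => Matrix.vecMul (ν i - ν k) (1 - γ • P k) with hu
  have hAsum : ∑ k, w k • ((1 : Matrix X X ℝ) - γ • P k) = 1 - γ • Q := by
    rw [hQdef]
    simp only [smul_sub]
    rw [Finset.sum_sub_distrib, ← Finset.sum_smul, hwsum, one_smul, Finset.smul_sum]
    congr 1
    refine Finset.sum_congr rfl fun k _ => ?_
    rw [smul_comm]
  have hkey : ν i - νw = Matrix.vecMul (∑ k, w k • u k) (1 - γ • Q)⁻¹ := by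
    have huk : ∀ k, u k = Matrix.vecMul (ν i) (1 - γ • P k) - (1 - γ) • α := by
      intro k
      rw [hu]
      simp only
      rw [Matrix.sub_vecMul, hsk k]
    have h1 : ∑ k, w k • u k = Matrix.vecMul (ν i - νw) (1 - γ • Q) := by
      calc ∑ k, w k • u k
          = ∑ k, (Matrix.vecMul (ν i) (w k • ((1:Matrix X X ℝ) - γ • P k))
              - w k • ((1 - γ) • α)) := by
            refine Finset.sum_congr rfl fun k _ => ?_
            rw [huk k, smul_sub, vecMul_matrix_smul]
        _ = Matrix.vecMul (ν i) (∑ k, w k • ((1:Matrix X X ℝ) - γ • P k))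
              - (∑ k, w k) • ((1 - γ) • α) := by
            rw [Finset.sum_sub_distrib, ← vecMul_matrix_sum, Finset.sum_smul]
        _ = Matrix.vecMul (ν i) (1 - γ • Q) - (1 - γ) • α := by
            rw [hAsum, hwsum, one_smul]
        _ = Matrix.vecMul (ν i - νw) (1 - γ • Q) := by
            rw [Matrix.sub_vecMul, hsw]
    rw [h1, Matrix.vecMul_vecMul, hQAB, Matrix.vecMul_one]
  -- ℓ¹ bounds
  have hεk : ∀ k, ∑ x, |ν i x - ν k x| ≤ ε := fun k => hε.2 ⟨i, k, rfl⟩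
  have hε0 : 0 ≤ ε := by
    have := hεk i
    simpa using this
  have hAk_row : ∀ k x, ∑ y, |((1 : Matrix X X ℝ) - γ • P k) x y| ≤ 1 + γ := by
    intro k x
    have hb : ∀ y, |((1:Matrix X X ℝ) - γ • P k) x y|
        ≤ (1:Matrix X X ℝ) x y + γ * P k x y := by
      intro y
      simp only [Matrix.sub_apply, Matrix.smul_apply, smul_eq_mul]
      refine (abs_sub _ _).trans ?_
      have h1 : |(1:Matrix X X ℝ) x y| = (1:Matrix X X ℝ) x y := by
        by_cases h : x = y <;> simp [Matrix.one_apply, h]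
      have h2 : |γ * P k x y| = γ * P k x y :=
        abs_of_nonneg (mul_nonneg hγ0.le (hPnonneg k x y))
      rw [h1, h2]
    calc ∑ y, |((1:Matrix X X ℝ) - γ • P k) x y|
        ≤ ∑ y, ((1:Matrix X X ℝ) x y + γ * P k x y) := Finset.sum_le_sum fun y _ => hb y
      _ = 1 + γ := by
        rw [Finset.sum_add_distrib, ← Finset.mul_sum, hProw k x, mul_one]
        simp [Matrix.one_apply]
  have hBw_row : ∀ x, ∑ y, |(1 - γ • Q)⁻¹ x y| ≤ 1 / (1 - γ) := by
    intro x
    rw [show ∑ y, |(1 - γ • Q)⁻¹ x y| = ∑ y, (1 - γ • Q)⁻¹ x y from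
      Finset.sum_congr rfl fun y _ => abs_of_nonneg (hQBnn x y), hQBrow x]
  have huk_l1 : ∀ k, ∑ x, |u k x| ≤ (1 + γ) * ε := by
    intro k
    refine (vecMul_l1_le _ _ _ (hAk_row k)).trans ?_
    refine mul_le_mul_of_nonneg_left ?_ (by linarith)
    calc ∑ x, |(ν i - ν k) x| = ∑ x, |ν i x - ν k x| := by
          refine Finset.sum_congr rfl fun x _ => by rw [Pi.sub_apply]
      _ ≤ ε := hεk k
  have hs_l1 : ∑ x, |(∑ k, w k • u k) x| ≤ (1 + γ) * ε := by
    calc ∑ x, |(∑ k, w k • u k) x|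
        ≤ ∑ x, ∑ k, w k * |u k x| := by
          refine Finset.sum_le_sum fun x _ => ?_
          rw [Finset.sum_apply]
          refine (Finset.abs_sum_le_sum_abs _ _).trans ?_
          refine Finset.sum_le_sum fun k _ => ?_
          rw [Pi.smul_apply, smul_eq_mul, abs_mul, abs_of_nonneg (hw k)]
      _ = ∑ k, w k * ∑ x, |u k x| := by
          rw [Finset.sum_comm]
          simp [Finset.mul_sum]
      _ ≤ ∑ k, w k * ((1 + γ) * ε) :=
          Finset.sum_le_sum fun k _ => mul_le_mul_of_nonneg_left (huk_l1 k) (hw k)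
      _ = (1 + γ) * ε := by rw [← Finset.sum_mul, hwsum, one_mul]
  calc ∑ x, |ν i x - νw x|
      = ∑ x, |Matrix.vecMul (∑ k, w k • u k) (1 - γ • Q)⁻¹ x| := by
        refine Finset.sum_congr rfl fun x _ => ?_
        rw [show ν i x - νw x = (ν i - νw) x from rfl, hkey]
    _ ≤ (1 / (1 - γ)) * ∑ x, |(∑ k, w k • u k) x| := vecMul_l1_le _ _ _ hBw_row
    _ ≤ (1 / (1 - γ)) * ((1 + γ) * ε) := by
        refine mul_le_mul_of_nonneg_left hs_l1 ?_
        positivity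
    _ = ε * (1 + γ) / (1 - γ) := by
        field_simp
end

section
/- Let P_1, ..., P_m be row-stochastic matrices on a finite state space, γ ∈ (0,1), and α a probability vector. Define ρ_i^T = α^T (I - γ P_i)^{-1} and v_{i,k} = ρ_i - ρ_k for all i,k ∈ [m]. Then for any i ∈ [m] and any w in the probability simplex Δ_[m], writing P_w = Σ_{k=1}^m w_k P_k, one has ρ_i^T - α^T (I - γ P_w)^{-1} = Σ_{k=1}^m w_k v_{i,k}^T (I - γ P_k) (I - γ P_w)^{-1}. -/
open Matrix BigOperators

lemma aux_vecMul_smul_mat {X Y : Type*} [Fintype X] (v : X → ℝ) (c : ℝ) (M : Matrix X Y ℝ) :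
    v ᵥ* (c • M) = c • (v ᵥ* M) := by
  funext y
  simp [Matrix.vecMul, dotProduct, Finset.mul_sum, mul_left_comm]

lemma aux_vecMul_sum_mat {X Y ι : Type*} [Fintype X] (v : X → ℝ) (s : Finset ι)
    (M : ι → Matrix X Y ℝ) : v ᵥ* (∑ k ∈ s, M k) = ∑ k ∈ s, v ᵥ* M k := by
  classical
  induction s using Finset.induction_on with
  | empty => simp [Matrix.vecMul_zero]
  | insert _ _ h ih => simp [Finset.sum_insert h, Matrix.vecMul_add, ih]

lemma aux_sum_vecMul {X Y ι : Type*} [Fintype X] (s : Finset ι) (f : ι → X → ℝ)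
    (M : Matrix X Y ℝ) : (∑ k ∈ s, f k) ᵥ* M = ∑ k ∈ s, f k ᵥ* M := by
  classical
  induction s using Finset.induction_on with
  | empty => simp [Matrix.zero_vecMul]
  | insert _ _ h ih => simp [Finset.sum_insert h, Matrix.add_vecMul, ih]

/-- `1 - γ • P` is invertible for a substochastic-type matrix. -/
lemma aux_isUnit_det {X : Type*} [Fintype X] [DecidableEq X]
    (P : Matrix X X ℝ) (hP : ∀ x x', 0 ≤ P x x') (hrow : ∀ x, ∑ x', P x x' = 1)
    (γ : ℝ) (hγ0 : 0 ≤ γ) (hγ1 : γ < 1) : IsUnit (1 - γ • P).det := by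
  rw [isUnit_iff_ne_zero]
  intro hdet
  obtain ⟨x, hx0, hx⟩ := Matrix.exists_mulVec_eq_zero_iff.mpr hdet
  have hne : (Finset.univ : Finset X).Nonempty := by
    by_contra h
    exact hx0 (funext fun j => absurd (Finset.mem_univ j)
      (fun hj => h ⟨j, hj⟩))
  obtain ⟨j, _, hj⟩ := Finset.exists_max_image Finset.univ (fun i => |x i|) hne
  have hxj : 0 < |x j| := by
    rcases Function.ne_iff.mp hx0 with ⟨i, hi⟩
    exact lt_of_lt_of_le (abs_pos.mpr hi) (hj i (Finset.mem_univ i))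
  have heq : x j = γ * (P *ᵥ x) j := by
    have h0 := congrFun hx j
    rw [Matrix.sub_mulVec, Matrix.one_mulVec, Matrix.smul_mulVec] at h0
    simp only [Pi.sub_apply, Pi.smul_apply, smul_eq_mul, Pi.zero_apply, sub_eq_zero] at h0
    exact h0
  have hb : |(P *ᵥ x) j| ≤ |x j| := by
    simp only [Matrix.mulVec, dotProduct]
    calc |∑ x', P j x' * x x'| ≤ ∑ x', |P j x' * x x'| := Finset.abs_sum_le_sum_abs _ _
    _ ≤ ∑ x', P j x' * |x j| := by
        apply Finset.sum_le_sum
        intro i _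
        rw [abs_mul, abs_of_nonneg (hP j i)]
        exact mul_le_mul_of_nonneg_left (hj i (Finset.mem_univ i)) (hP j i)
    _ = |x j| := by rw [← Finset.sum_mul, hrow, one_mul]
  have hle : |x j| ≤ γ * |x j| :=
    calc |x j| = γ * |(P *ᵥ x) j| := by rw [heq, abs_mul, abs_of_nonneg hγ0]
    _ ≤ γ * |x j| := mul_le_mul_of_nonneg_left hb hγ0
  nlinarith

/-- With `ρ i = αᵀ (I - γ P i)⁻¹` and `v i k = ρ i - ρ k`, for any `i` and any
`w` in the simplex, writing `P_w = ∑ k, w k • P k`,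
`ρ iᵀ - αᵀ (I - γ P_w)⁻¹ = ∑ k, w k • (v i k)ᵀ (I - γ P k) (I - γ P_w)⁻¹`. -/
theorem mixture_resolvent_difference {X : Type*} [Fintype X] [DecidableEq X] {m : ℕ}
    (P : Fin m → Matrix X X ℝ)
    (hPnonneg : ∀ i x x', 0 ≤ P i x x') (hProw : ∀ i x, ∑ x', P i x x' = 1)
    (γ : ℝ) (hγ : γ ∈ Set.Ioo (0 : ℝ) 1)
    (α : X → ℝ) (hαnonneg : ∀ x, 0 ≤ α x) (hαsum : ∑ x, α x = 1)
    (ρ : Fin m → X → ℝ) (hρ : ∀ i, ρ i = Matrix.vecMul α (1 - γ • P i)⁻¹)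
    (v : Fin m → Fin m → X → ℝ) (hv : ∀ i k, v i k = ρ i - ρ k) :
    ∀ (i : Fin m) (w : Fin m → ℝ), (∀ k, 0 ≤ w k) → ∑ k, w k = 1 →
      ρ i - Matrix.vecMul α (1 - γ • ∑ k, w k • P k)⁻¹ =
        ∑ k, w k •
          Matrix.vecMul (Matrix.vecMul (v i k) (1 - γ • P k))
            (1 - γ • ∑ l, w l • P l)⁻¹ := by
  intro i w hw hw1
  obtain ⟨hγ0, hγ1⟩ := hγ
  set Pw : Matrix X X ℝ := ∑ l, w l • P l with hPw
  have hPwnn : ∀ x x', 0 ≤ Pw x x' := fun x x' => by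
    simp only [hPw, Matrix.sum_apply, Matrix.smul_apply, smul_eq_mul]
    apply Finset.sum_nonneg
    intro k _
    exact mul_nonneg (hw k) (hPnonneg k x x')
  have hPwrow : ∀ x, ∑ x', Pw x x' = 1 := fun x => by
    simp only [hPw, Matrix.sum_apply, Matrix.smul_apply, smul_eq_mul]
    rw [Finset.sum_comm]
    calc ∑ k, ∑ x', w k * P k x x' = ∑ k, w k := by
          congr 1; funext k; rw [← Finset.mul_sum, hProw, mul_one]
      _ = 1 := hw1
  have hAw : IsUnit (1 - γ • Pw).det :=
    aux_isUnit_det Pw hPwnn hPwrow γ hγ0.le hγ1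
  have hAk : ∀ k, IsUnit (1 - γ • P k).det := fun k =>
    aux_isUnit_det (P k) (hPnonneg k) (hProw k) γ hγ0.le hγ1
  -- key: ρ k ᵥ* (1 - γ • P k) = α
  have key : ∀ k, ρ k ᵥ* (1 - γ • P k) = α := fun k => by
    rw [hρ k, Matrix.vecMul_vecMul, Matrix.nonsing_inv_mul _ (hAk k), Matrix.vecMul_one]
  -- inner sum equals ρ i ᵥ* (1 - γ • Pw) - α
  have inner : ∑ k, w k • ((v i k) ᵥ* (1 - γ • P k)) = ρ i ᵥ* (1 - γ • Pw) - α := by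
    have : ∀ k, w k • ((v i k) ᵥ* (1 - γ • P k))
        = w k • (ρ i ᵥ* (1 - γ • P k)) - w k • α := by
      intro k
      rw [hv, Matrix.sub_vecMul, key k, smul_sub]
    simp only [this]
    rw [Finset.sum_sub_distrib, ← Finset.sum_smul, hw1, one_smul]
    congr 1
    have : ∀ k, w k • (ρ i ᵥ* (1 - γ • P k)) = w k • ρ i - (γ * w k) • (ρ i ᵥ* P k) := by
      intro k
      rw [Matrix.vecMul_sub, Matrix.vecMul_one, aux_vecMul_smul_mat, smul_sub, smul_smul, mul_comm (w k) γ]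
    simp only [this]
    rw [Finset.sum_sub_distrib, ← Finset.sum_smul, hw1, one_smul]
    rw [Matrix.vecMul_sub, Matrix.vecMul_one, aux_vecMul_smul_mat, hPw,
      aux_vecMul_sum_mat]
    congr 1
    rw [Finset.smul_sum]
    congr 1
    funext k
    rw [aux_vecMul_smul_mat, smul_smul]
  calc ρ i - α ᵥ* (1 - γ • Pw)⁻¹
      = (ρ i ᵥ* (1 - γ • Pw) - α) ᵥ* (1 - γ • Pw)⁻¹ := by
        rw [Matrix.sub_vecMul, Matrix.vecMul_vecMul,
          Matrix.mul_nonsing_inv _ hAw, Matrix.vecMul_one]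
    _ = (∑ k, w k • ((v i k) ᵥ* (1 - γ • P k))) ᵥ* (1 - γ • Pw)⁻¹ := by rw [inner]
    _ = ∑ k, w k • ((v i k) ᵥ* (1 - γ • P k)) ᵥ* (1 - γ • Pw)⁻¹ := by
        rw [aux_sum_vecMul]
        congr 1; funext k; rw [Matrix.smul_vecMul]
end

section
/- Let G be the m × m symmetric 0-1 adjacency matrix of a simple graph (zero diagonal), A = I + G, and for i ∈ [m] let P_i be the (m+3) × (m+3) row-stochastic matrix defined by: row 0 has entry 1 in column i (among columns 1..m); for j ∈ [m], row j has entry A_{j,i} in column m+1 and 1 - A_{j,i} in column m+2; rows m+1 and m+2 have entry 1 in column m+2. For w ∈ Δ_[m] let P_w = Σ_{i=1}^m w_i P_i. Then the (0, m+1) entry of P_w^2 equals the quadratic form w^T A w. -/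
open Matrix BigOperators

/-- States `0, 1, …, m, m+1, m+2` of the hardness-reduction MDP: `start` is state `0`,
`mid j` (for `j : Fin m`) are states `1, …, m`, `pre` is state `m+1`, `last` is state `m+2`. -/
inductive HardState (m : ℕ) where
  | start : HardState m
  | mid : Fin m → HardState m
  | pre : HardState m
  | last : HardState m
  deriving DecidableEq, Fintype

/-- The chain `P i` of the reduction: row `0` has a `1` in column `i` (among columns `1..m`);
row `j ∈ [m]` has `A j i` in column `m+1` and `1 - A j i` in column `m+2`; rows `m+1` and `m+2`
have a `1` in column `m+2`. -/
def hardChain {m : ℕ} (A : Matrix (Fin m) (Fin m) ℝ) (i : Fin m) :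
    Matrix (HardState m) (HardState m) ℝ :=
  Matrix.of fun r s =>
    match r, s with
    | .start, .mid j => if j = i then 1 else 0
    | .mid j, .pre => A j i
    | .mid j, .last => 1 - A j i
    | .pre, .last => 1
    | .last, .last => 1
    | _, _ => 0

/-- With `A = I + G` for a symmetric 0-1 adjacency matrix `G` with zero
diagonal, for `w` in the simplex the `(0, m+1)` entry of `P_w ^ 2` equals the quadratic form
`wᵀ A w`. -/
theorem hardChain_square_quadratic_form {m : ℕ}
    (G : Matrix (Fin m) (Fin m) ℝ) (hGsymm : G.IsSymm)
    (hG01 : ∀ i j, G i j = 0 ∨ G i j = 1) (hGdiag : ∀ i, G i i = 0)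
    (A : Matrix (Fin m) (Fin m) ℝ) (hA : A = 1 + G)
    (w : Fin m → ℝ) (hwnonneg : ∀ i, 0 ≤ w i) (hwsum : ∑ i, w i = 1) :
    ((∑ i, w i • hardChain A i) ^ 2) HardState.start HardState.pre =
      w ⬝ᵥ A.mulVec w := by
  set P := ∑ i, w i • hardChain A i with hP
  have hentry : ∀ r s, P r s = ∑ i, w i * hardChain A i r s := by
    intro r s
    rw [hP]
    simp [Matrix.sum_apply, Matrix.smul_apply]
  have h1 : (P ^ 2) HardState.start HardState.pre
      = ∑ s : HardState m, P HardState.start s * P s HardState.pre := by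
    rw [pow_two, Matrix.mul_apply]
  rw [h1]
  have hmidinj : Function.Injective (HardState.mid (m := m)) := by
    intro a b h; cases h; rfl
  have hsub : (Finset.univ.image (HardState.mid (m := m))) ⊆ Finset.univ :=
    Finset.subset_univ _
  rw [← Finset.sum_subset hsub, Finset.sum_image (fun a _ b _ h => hmidinj h)]
  · have : ∀ j : Fin m,
        P HardState.start (HardState.mid j) * P (HardState.mid j) HardState.pre
        = w j * ∑ i, w i * A j i := by
      intro j
      rw [hentry, hentry]
      congr 1
      simp [hardChain]
    rw [Finset.sum_congr rfl fun j _ => this j]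
    simp [dotProduct, Matrix.mulVec, dotProduct, mul_comm]
  · intro s _ hs
    have : P s HardState.pre = 0 := by
      cases s with
      | mid j => exact absurd (Finset.mem_image_of_mem _ (Finset.mem_univ j)) hs
      | start => rw [hentry]; simp [hardChain]
      | pre => rw [hentry]; simp [hardChain]
      | last => rw [hentry]; simp [hardChain]
    rw [this, mul_zero]
end

section
/- Let G be the m × m symmetric 0-1 adjacency matrix of a simple graph (zero diagonal), A = I + G, and for i ∈ [m] let P_i be the (m+3) × (m+3) row-stochastic matrix defined by: row 0 has entry 1 in column i (among columns 1..m); for j ∈ [m], row j has entry A_{j,i} in column m+1 and 1 - A_{j,i} in column m+2; rows m+1 and m+2 have entry 1 in column m+2. Let γ ∈ (0,1), let α be the unit vector with all mass on state 0, and let c be the vector with entry 1 at state m+1 and 0 elsewhere. Then for every w ∈ Δ_[m], writing P_w = Σ_{i=1}^m w_i P_i, the expected discounted cost satisfies (1-γ) α^T (I - γ P_w)^{-1} c = (1-γ) γ^2 w^T A w. -/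
open Matrix BigOperators

def hsEquiv (m : ℕ) : HardState m ≃ Option (Option (Option (Fin m))) where
  toFun s := match s with
    | .start => none
    | .pre => some none
    | .last => some (some none)
    | .mid j => some (some (some j))
  invFun x := match x with
    | none => .start
    | some none => .pre
    | some (some none) => .last
    | some (some (some j)) => .mid j
  left_inv s := by cases s <;> rfl
  right_inv x := by rcases x with _ | _ | _ | j <;> rfl

lemma sum_hardState {m : ℕ} (f : HardState m → ℝ) :
    ∑ s : HardState m, f s =
      f .start + f .pre + f .last + ∑ j : Fin m, f (.mid j) := by
  rw [← Equiv.sum_comp (hsEquiv m).symm f]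
  rw [Fintype.sum_option, Fintype.sum_option, Fintype.sum_option]
  simp [hsEquiv]
  ring

/-- With `A = I + G`, initial distribution `α` concentrated on state `0` and
cost vector `c` equal to the indicator of state `m+1`, for every `w` in the simplex the expected
discounted cost of the mixture chain is `(1-γ) αᵀ (I - γ P_w)⁻¹ c = (1-γ) γ² wᵀ A w`. -/
theorem hardChain_discounted_cost {m : ℕ}
    (G : Matrix (Fin m) (Fin m) ℝ) (hGsymm : G.IsSymm)
    (hG01 : ∀ i j, G i j = 0 ∨ G i j = 1) (hGdiag : ∀ i, G i i = 0)
    (A : Matrix (Fin m) (Fin m) ℝ) (hA : A = 1 + G)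
    (γ : ℝ) (hγ : γ ∈ Set.Ioo (0 : ℝ) 1)
    (α : HardState m → ℝ) (hα : α = fun s => if s = HardState.start then 1 else 0)
    (c : HardState m → ℝ) (hc : c = fun s => if s = HardState.pre then 1 else 0) :
    ∀ w : Fin m → ℝ, (∀ i, 0 ≤ w i) → ∑ i, w i = 1 →
      (1 - γ) * (Matrix.vecMul α (1 - γ • ∑ i, w i • hardChain A i)⁻¹ ⬝ᵥ c) =
        (1 - γ) * γ ^ 2 * (w ⬝ᵥ A.mulVec w) := by
  intro w hw hw1
  obtain ⟨hγ0, hγ1⟩ := hγ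
  have h1γ : (1 : ℝ) - γ ≠ 0 := by linarith
  set M : Matrix (HardState m) (HardState m) ℝ :=
    1 - γ • ∑ i, w i • hardChain A i with hM
  -- entries of M
  have hMapp : ∀ r s, M r s =
      (if r = s then 1 else 0) - γ * ∑ i, w i * hardChain A i r s := by
    intro r s
    simp [hM, Matrix.sum_apply, Matrix.one_apply, Finset.mul_sum]
  -- the explicit solution of M v = c
  set v : HardState m → ℝ := fun s =>
    match s with
    | .start => γ ^ 2 * (w ⬝ᵥ A.mulVec w)
    | .mid j => γ * A.mulVec w j
    | .pre => 1
    | .last => 0 with hv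
  have hMv : M *ᵥ v = c := by
    funext r
    rw [Matrix.mulVec, dotProduct, sum_hardState]
    cases r with
    | start =>
        simp only [hMapp, hardChain, hv, hc, Matrix.of_apply]
        simp [Finset.sum_ite_eq, dotProduct, Matrix.mulVec, Finset.mul_sum]
        ring_nf
    | mid j =>
        simp only [hMapp, hardChain, hv, hc, Matrix.of_apply]
        simp [Matrix.mulVec, dotProduct, Finset.mul_sum]
        ring_nf
        rw [neg_add_eq_zero]
        exact Finset.sum_congr rfl fun x _ => by ring
    | pre =>
        simp only [hMapp, hardChain, hv, hc, Matrix.of_apply]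
        simp
    | last =>
        simp only [hMapp, hardChain, hv, hc, Matrix.of_apply]
        simp
  -- invertibility of M
  have hinj : Function.Injective M.mulVec := by
    intro x y hxy
    have hz : M *ᵥ (x - y) = 0 := by
      rw [Matrix.mulVec_sub, hxy, sub_self]
    set z := x - y with hzdef
    have hz' : ∀ r, ∑ s, M r s * z s = 0 := by
      intro r; have := congrFun hz r
      simpa [Matrix.mulVec, dotProduct] using this
    have hlast : z .last = 0 := by
      have := hz' .last
      rw [sum_hardState] at this
      simp [hMapp, hardChain, hw1] at this
      rcases this with h | h
      · exact absurd h h1γ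
      · exact h
    have hpre : z .pre = 0 := by
      have := hz' .pre
      rw [sum_hardState] at this
      simp [hMapp, hardChain, hlast] at this
      exact this
    have hmid : ∀ j, z (.mid j) = 0 := by
      intro j
      have := hz' (.mid j)
      rw [sum_hardState] at this
      simpa [hMapp, hardChain, hlast, hpre, Finset.sum_ite_eq] using this
    have hstart : z .start = 0 := by
      have := hz' .start
      rw [sum_hardState] at this
      simpa [hMapp, hardChain, hmid] using this
    have : z = 0 := by
      funext s; cases s with
      | start => exact hstart
      | mid j => exact hmid j
      | pre => exact hpre
      | last => exact hlast
    exact sub_eq_zero.mp (by rwa [← hzdef])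
  have hunit : IsUnit M := Matrix.mulVec_injective_iff_isUnit.mp hinj
  have hdet : IsUnit M.det := (Matrix.isUnit_iff_isUnit_det M).mp hunit
  have hMInvc : M⁻¹ *ᵥ c = v := by
    rw [← hMv, Matrix.mulVec_mulVec, Matrix.nonsing_inv_mul M hdet, Matrix.one_mulVec]
  rw [← Matrix.dotProduct_mulVec, hMInvc]
  rw [dotProduct, sum_hardState]
  simp [hα, hv]
  ring
end
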